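/- Let S be an incomplete pre-Hilbert space with completion H, and let u ∈ H \ S. For each finite dimensional subspace F of S let P_F denote the orthogonal projection onto F. Then the net (span{P_F u} + F^{⊥_S})_{F}, indexed by the finite dimensional subspaces F of S directed by inclusion, is decreasing and its intersection over all F is {0}. -/

import Mathlib

variable {𝕜 H : Type*} [RCLike 𝕜] [NormedAddCommGroup H] [InnerProductSpace 𝕜 H]
  [CompleteSpace H]

/-- The orthogonal projection of `u` onto a finite dimensional subspace `F`. -/
noncomputable def projVec (F : Submodule 𝕜 H) (hF : FiniteDimensional 𝕜 F) (u : H) : H :=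
  letI := hF
  (F.orthogonalProjectionOnto u : H)

/-- Let `S` be an incomplete pre-Hilbert space (a dense proper subspace of its Hilbert
space completion `H`) and `u ∈ H \ S`. Then the net `(span{P_F u} + F^{⊥_S})_F`, indexed
by the finite dimensional subspaces `F` of `S` directed by inclusion, is decreasing and
its intersection over all `F` is `{0}`. -/
theorem projection_net_decreases_to_zero (S : Submodule 𝕜 H) (hS : Dense (S : Set H))
    (u : H) (hu : u ∉ S) :
    (∀ F G : {F : Submodule 𝕜 H // FiniteDimensional 𝕜 F ∧ F ≤ S}, F.1 ≤ G.1 →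
        (𝕜 ∙ projVec G.1 G.2.1 u) ⊔ (G.1ᗮ ⊓ S) ≤ (𝕜 ∙ projVec F.1 F.2.1 u) ⊔ (F.1ᗮ ⊓ S)) ∧
      (⋂ F : {F : Submodule 𝕜 H // FiniteDimensional 𝕜 F ∧ F ≤ S},
          (((𝕜 ∙ projVec F.1 F.2.1 u) ⊔ (F.1ᗮ ⊓ S) : Submodule 𝕜 H) : Set H)) = {0} := by
  constructor
  · rintro ⟨F, hFfin, hFS⟩ ⟨G, hGfin, hGS⟩ hFG
    letI := hFfin; letI := hGfin
    apply sup_le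
    · rw [Submodule.span_singleton_le_iff_mem]
      have key : projVec G hGfin u =
          projVec F hFfin u + (projVec G hGfin u - projVec F hFfin u) := (add_sub_cancel _ _).symm
      rw [key]
      refine Submodule.add_mem_sup (Submodule.mem_span_singleton_self _) ?_
      refine Submodule.mem_inf.2 ⟨?_, ?_⟩
      · have := Submodule.sub_starProjection_mem_orthogonal (K := F)
          (G.starProjection u)
        rwa [Submodule.starProjection_apply F, Submodule.orthogonalProjectionOnto_starProjection_of_le hFG,
          Submodule.starProjection_apply] at this
      · exact Submodule.sub_mem _ (hGS (Submodule.orthogonalProjectionOnto G u).2)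
          (hFS (Submodule.orthogonalProjectionOnto F u).2)
    · exact le_trans (inf_le_inf_right S (Submodule.orthogonal_le hFG)) le_sup_right
  · ext x
    simp only [Set.mem_iInter, Set.mem_singleton_iff, SetLike.mem_coe]
    constructor
    · intro hx
      -- x ∈ S
      have hxS : x ∈ S := by
        obtain ⟨a, ha, b, hb, hab⟩ := Submodule.mem_sup.1
          (hx ⟨⊥, ⟨inferInstance, bot_le⟩⟩)
        obtain ⟨c, hc⟩ := Submodule.mem_span_singleton.1 ha
        have : projVec (⊥ : Submodule 𝕜 H) inferInstance u = 0 := by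
          simp [projVec]
        rw [this, smul_zero] at hc
        rw [← hab, ← hc, zero_add]
        exact hb.2
      by_contra hx0
      -- u ∈ closure (𝕜 ∙ x)
      have hcl : u ∈ closure ((𝕜 ∙ x : Submodule 𝕜 H) : Set H) := by
        rw [Metric.mem_closure_iff]
        intro ε hε
        obtain ⟨s, hsS, hsd⟩ : ∃ s ∈ (S : Set H), dist u s < ε := by
          have := Metric.mem_closure_iff.1 (hS.closure_eq ▸ Set.mem_univ u : u ∈ closure (S : Set H))
          exact this ε hε
        set F : Submodule 𝕜 H := Submodule.span 𝕜 {x, s} with hFdef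
        have hFfin : FiniteDimensional 𝕜 F :=
          FiniteDimensional.span_of_finite 𝕜 (Set.toFinite {x, s})
        have hFS : F ≤ S := by
          rw [hFdef, Submodule.span_le]
          rintro y (rfl | rfl)
          exacts [hxS, hsS]
        letI := hFfin
        obtain ⟨a, ha, b, hb, hab⟩ := Submodule.mem_sup.1 (hx ⟨F, hFfin, hFS⟩)
        obtain ⟨c, hc⟩ := Submodule.mem_span_singleton.1 ha
        -- project: x = c • P_F u
        have hxF : x ∈ F := Submodule.subset_span (Set.mem_insert _ _)
        have hsF : s ∈ F := Submodule.subset_span (Set.mem_insert_of_mem _ rfl)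
        have hPx : (Submodule.orthogonalProjectionOnto F x : H) = x := by
          exact Submodule.starProjection_eq_self_iff.2 hxF
        have hPb : Submodule.orthogonalProjectionOnto F b = 0 :=
          Submodule.orthogonalProjectionOnto_apply_of_mem_orthogonal hb.1
        have hPa : (Submodule.orthogonalProjectionOnto F a : H) = a := by
          refine Submodule.starProjection_eq_self_iff.2 ?_
          rw [← hc]
          exact Submodule.smul_mem _ _ ((Submodule.orthogonalProjectionOnto F u).2)
        have hxeq : x = c • (Submodule.orthogonalProjectionOnto F u : H) := by
          have : Submodule.orthogonalProjectionOnto F x = Submodule.orthogonalProjectionOnto F a +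
              Submodule.orthogonalProjectionOnto F b := by rw [← map_add, hab]
          rw [hPb, add_zero] at this
          have hx' : x = a := by
            have := congrArg (Subtype.val) this
            rw [hPx] at this  -- no, hPx is on coe
            rw [this, hPa]
          rw [hx', ← hc]
          rfl
        have hc0 : c ≠ 0 := by
          rintro rfl
          rw [zero_smul] at hxeq
          exact hx0 hxeq
        refine ⟨(Submodule.orthogonalProjectionOnto F u : H), ?_, ?_⟩
        · exact Submodule.mem_span_singleton.2 ⟨c⁻¹, by rw [hxeq, smul_smul,
            inv_mul_cancel₀ hc0, one_smul]⟩
        · calc dist u (Submodule.orthogonalProjectionOnto F u : H)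
              = ‖u - Submodule.orthogonalProjectionOnto F u‖ := dist_eq_norm _ _
            _ ≤ ‖u - s‖ := by
                rw [← Submodule.starProjection_apply, Submodule.starProjection_minimal]
                exact ciInf_le ⟨0, fun y ⟨z, hz⟩ => hz ▸ norm_nonneg _⟩ (⟨s, hsF⟩ : F)
            _ = dist u s := (dist_eq_norm _ _).symm
            _ < ε := hsd
      rw [(Submodule.closed_of_finiteDimensional (𝕜 ∙ x)).closure_eq] at hcl
      exact absurd ((Submodule.span_singleton_le_iff_mem x S).2 hxS hcl) hu
    · rintro rfl
      intro F
      exact Submodule.zero_mem _
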